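/- For the (q,β)-bridge A_{q,β} = T₊ ∪ T₋ ⊂ ℝ⁴ with 1 < β < q, where T_± = {0 ≤ t ≤ 1, −t^β ≤ x ≤ t^β, y = ±t^q, z = 0}, the tangent cone at the origin is the single ray {(0,0,0,t) : t ≥ 0}. -/

import Mathlib

open Filter Topology Metric

/-- Tangent cone at the origin: limits of sequences `λₖ • xₖ` with `xₖ ∈ X`, `xₖ → 0`, `λₖ > 0`. -/
def T0 {E : Type*} [NormedAddCommGroup E] [NormedSpace ℝ E] (X : Set E) : Set E :=
  {w | ∃ (x : ℕ → E) (l : ℕ → ℝ), (∀ k, x k ∈ X) ∧ Tendsto x atTop (𝓝 0) ∧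
    (∀ k, 0 < l k) ∧ Tendsto (fun k => l k • x k) atTop (𝓝 w)}

/-- Ambient Lipschitz equivalence of germs at the origin: a germ of a bi-Lipschitz
homeomorphism `h` of `(ℝⁿ,0)` with `h(X) = Y` near `0`. -/
def AmbientLipEquiv {E : Type*} [NormedAddCommGroup E] [NormedSpace ℝ E]
    (X Y : Set E) : Prop :=
  ∃ (h : E → E) (K ε : ℝ), 0 < ε ∧ 1 ≤ K ∧ h 0 = 0 ∧ Function.Injective h ∧
    (∀ x ∈ Metric.ball (0:E) ε, ∀ y ∈ Metric.ball (0:E) ε,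
      K⁻¹ * ‖x - y‖ ≤ ‖h x - h y‖ ∧ ‖h x - h y‖ ≤ K * ‖x - y‖) ∧
    h '' (X ∩ Metric.ball (0:E) ε) = Y ∩ h '' (Metric.ball (0:E) ε)

/-- The `(q,β)`-bridge `A_{q,β} = T₊ ∪ T₋ ⊂ ℝ⁴`, coordinates `(x,y,z,t)`. -/
def bridge (q β : ℝ) : Set (EuclideanSpace ℝ (Fin 4)) :=
  {p | ∃ x t : ℝ, 0 ≤ t ∧ t ≤ 1 ∧ |x| ≤ t ^ β ∧
    (p = ![x, t ^ q, 0, t] ∨ p = ![x, -(t ^ q), 0, t])}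

private lemma rpow_split {t c : ℝ} (ht : 0 ≤ t) (hc : 1 < c) :
    t ^ c = t * t ^ (c - 1) := by
  rcases ht.eq_or_lt with h | h
  · rw [← h, Real.zero_rpow (by linarith), Real.zero_rpow (by linarith), zero_mul]
  · conv_lhs => rw [show c = (c - 1) + 1 by ring]
    rw [Real.rpow_add_one h.ne']
    ring

private lemma rpow_tendsto {t : ℕ → ℝ} (ht : Tendsto t atTop (𝓝 0)) {c : ℝ} (hc : 0 < c) :
    Tendsto (fun k => t k ^ c) atTop (𝓝 0) := by
  have h : ContinuousAt (fun s : ℝ => s ^ c) 0 :=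
    Real.continuousAt_rpow_const 0 c (Or.inr hc.le)
  have := h.tendsto.comp ht
  simpa [Real.zero_rpow hc.ne', Function.comp_def] using this

/-- for `1 < β < q`, the tangent cone at the origin of the bridge
`A_{q,β}` is the single ray `{(0,0,0,t) : t ≥ 0}`. -/
theorem tangentCone_bridge (q β : ℝ) (hβ : 1 < β) (hq : β < q) :
    T0 (bridge q β) =
      {p : EuclideanSpace ℝ (Fin 4) | ∃ t : ℝ, 0 ≤ t ∧ p = ![0, 0, 0, t]} := by
  have hq1 : 1 < q := hβ.trans hq
  ext w
  simp only [T0, Set.mem_setOf_eq]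
  constructor
  · rintro ⟨x, l, hmem, hx0, hlpos, hconv⟩
    choose a t ht0 ht1 hab hp using hmem
    have hco : ∀ i : Fin 4, Tendsto (fun k => l k * x k i) atTop (𝓝 (w i)) := by
      intro i
      have := ((PiLp.continuous_apply 2 (fun _ : Fin 4 => ℝ) i).tendsto w).comp hconv
      simpa [PiLp.smul_apply, Function.comp_def] using this
    have hxco : ∀ i : Fin 4, Tendsto (fun k => x k i) atTop (𝓝 0) := by
      intro i
      have := ((PiLp.continuous_apply 2 (fun _ : Fin 4 => ℝ) i).tendsto 0).comp hx0
      simpa [Function.comp_def] using this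
    have h0 : ∀ k, x k 0 = a k := fun k => by rcases hp k with h | h <;> simp [h]
    have h2 : ∀ k, x k 2 = 0 := fun k => by rcases hp k with h | h <;> simp [h]
    have h3 : ∀ k, x k 3 = t k := fun k => by rcases hp k with h | h <;> simp [h]
    have h1 : ∀ k, |x k 1| = t k ^ q := fun k => by
      rcases hp k with h | h <;>
        simp [h, abs_of_nonneg (Real.rpow_nonneg (ht0 k) q)]
    have ht : Tendsto t atTop (𝓝 0) := (hxco 3).congr h3
    have hs : Tendsto (fun k => l k * t k) atTop (𝓝 (w 3)) :=
      (hco 3).congr fun k => by rw [h3]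
    have hw3 : 0 ≤ w 3 := ge_of_tendsto' hs fun k => mul_nonneg (hlpos k).le (ht0 k)
    -- auxiliary: squeeze for an exponent c > 1
    have key : ∀ c : ℝ, 1 < c → ∀ u : ℕ → ℝ, (∀ k, |u k| ≤ t k ^ c) →
        Tendsto (fun k => l k * u k) atTop (𝓝 0) := by
      intro c hc u hu
      have hg : Tendsto (fun k => (l k * t k) * t k ^ (c - 1)) atTop (𝓝 0) := by
        have := hs.mul (rpow_tendsto ht (by linarith : (0:ℝ) < c - 1))
        simpa using this
      refine squeeze_zero_norm (fun k => ?_) hg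
      have : |l k * u k| ≤ l k * t k ^ c := by
        rw [abs_mul, abs_of_pos (hlpos k)]
        exact mul_le_mul_of_nonneg_left (hu k) (hlpos k).le
      calc ‖l k * u k‖ ≤ l k * t k ^ c := this
        _ = (l k * t k) * t k ^ (c - 1) := by rw [rpow_split (ht0 k) hc]; ring
    have hw0 : w 0 = 0 := by
      refine tendsto_nhds_unique (hco 0) (key β hβ (fun k => x k 0) fun k => ?_)
      simpa only [h0] using hab k
    have hw1 : w 1 = 0 :=
      tendsto_nhds_unique (hco 1) (key q hq1 (fun k => x k 1) fun k => le_of_eq (h1 k))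
    have hw2 : w 2 = 0 := by
      refine tendsto_nhds_unique (hco 2) ?_
      simpa [h2] using (tendsto_const_nhds : Tendsto (fun _ : ℕ => (0:ℝ)) atTop (𝓝 0))
    refine ⟨w 3, hw3, funext fun i => ?_⟩
    fin_cases i <;> simp [hw0, hw1, hw2]
  · rintro ⟨c, hc, hw⟩
    obtain rfl : w = WithLp.toLp 2 ![0, 0, 0, c] := by rw [← hw]
    have hk1 : ∀ k : ℕ, (0:ℝ) < (k:ℝ) + 1 := fun k => by positivity
    have hinv : Tendsto (fun k : ℕ => ((k:ℝ) + 1)⁻¹) atTop (𝓝 0) := by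
      simpa [one_div] using tendsto_one_div_add_atTop_nhds_zero_nat (𝕜 := ℝ)
    have hind : Topology.IsInducing (fun v : EuclideanSpace ℝ (Fin 4) => v.ofLp) :=
      (PiLp.homeomorph 2 (fun _ : Fin 4 => ℝ)).isInducing
    refine ⟨fun k => WithLp.toLp 2 ![0, ((k:ℝ)+1)⁻¹ ^ q, 0, ((k:ℝ)+1)⁻¹],
      fun k => c * ((k:ℝ)+1) + 1, fun k => ?_, ?_, fun k => by positivity, ?_⟩
    · exact ⟨0, ((k:ℝ)+1)⁻¹, by positivity,
        inv_le_one_of_one_le₀ (by linarith [Nat.cast_nonneg (α := ℝ) k]),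
        by rw [abs_zero]; exact Real.rpow_nonneg (by positivity) β, Or.inl rfl⟩
    · rw [hind.tendsto_nhds_iff, tendsto_pi_nhds]
      intro i
      fin_cases i <;> simp
      · exact rpow_tendsto hinv (by linarith)
      · exact hinv
    · rw [hind.tendsto_nhds_iff, tendsto_pi_nhds]
      intro i
      have hlt : Tendsto (fun k : ℕ => (c * ((k:ℝ)+1) + 1) * ((k:ℝ)+1)⁻¹) atTop (𝓝 c) := by
        have : ∀ k : ℕ, (c * ((k:ℝ)+1) + 1) * ((k:ℝ)+1)⁻¹ = c + ((k:ℝ)+1)⁻¹ := by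
          intro k; field_simp
        have h' := (tendsto_const_nhds (x := c) (f := atTop (α := ℕ))).add hinv
        simp only [add_zero] at h'
        exact h'.congr fun k => (this k).symm
      fin_cases i <;> simp [PiLp.smul_apply]
      · -- coordinate 1
        have heq : ∀ k : ℕ, (c * ((k:ℝ)+1) + 1) * ((k:ℝ)+1)⁻¹ ^ q
            = ((c * ((k:ℝ)+1) + 1) * ((k:ℝ)+1)⁻¹) * ((k:ℝ)+1)⁻¹ ^ (q-1) := by
          intro k
          rw [rpow_split (by positivity : (0:ℝ) ≤ ((k:ℝ)+1)⁻¹) hq1]; ring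
        have := hlt.mul (rpow_tendsto hinv (by linarith : (0:ℝ) < q - 1))
        simp only [mul_zero] at this
        exact this.congr fun k => (heq k).symm
      · exact hlt
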